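/- (Prékopa's theorem) Let φ : ℝ^(n+1) = ℝ_t × ℝⁿ_x → ℝ be a convex function such that ∫_{ℝⁿ} e^{−φ(t,x)} dx is finite for all t. Then the function φ̃(t) := −log ∫_{ℝⁿ} e^{−φ(t,x)} dx is convex on ℝ. -/

import Mathlib

open MeasureTheory Set Pointwise
open scoped ENNReal NNReal

lemma bm_compact (K L : Set ℝ) (hK : IsCompact K) (hL : IsCompact L)
    (hKne : K.Nonempty) (hLne : L.Nonempty) :
    volume K + volume L ≤ volume (K + L) := by
  set a := sSup K with ha
  set b := sInf L with hb
  have haK : a ∈ K := hK.sSup_mem hKne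
  have hbL : b ∈ L := hL.sInf_mem hLne
  have h1 : (fun x => x + b) '' K ⊆ K + L := by
    rintro _ ⟨x, hx, rfl⟩; exact Set.add_mem_add hx hbL
  have h2 : ((fun y => a + y) '' L) \ {a + b} ⊆ K + L := by
    rintro z ⟨⟨y, hy, rfl⟩, _⟩; exact Set.add_mem_add haK hy
  have hdisj : Disjoint ((fun x => x + b) '' K) (((fun y => a + y) '' L) \ {a + b}) := by
    rw [Set.disjoint_left]
    rintro _ ⟨x, hx, rfl⟩ ⟨⟨y, hy, hxy⟩, hne⟩
    apply hne
    have h3 : x ≤ a := le_csSup hK.bddAbove hx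
    have h4 : b ≤ y := csInf_le hL.bddBelow hy
    have : x + b = a + y := hxy.symm
    have : x = a ∧ b = y := by constructor <;> linarith
    simp [this.1, this.2]
  have hmK : MeasurableSet ((fun x => x + b) '' K) :=
    ((hK.image (continuous_add_right b)).isClosed).measurableSet
  calc volume K + volume L
      = volume ((fun x => x + b) '' K) + volume (((fun y => a + y) '' L) \ {a + b}) := by
        rw [Set.image_add_right, measure_preimage_add_right _ _ _,
          measure_diff_null (measure_singleton _), Set.image_add_left,
          measure_preimage_add _ _ _]
    _ = volume (((fun x => x + b) '' K) ∪ (((fun y => a + y) '' L) \ {a + b})) := by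
        rw [measure_union hdisj]
        · exact ((((hL.image (continuous_add_left a)).isClosed).measurableSet).diff
            (measurableSet_singleton _))
    _ ≤ volume (K + L) := measure_mono (Set.union_subset h1 h2)

lemma vol_smul (c : ℝ) (hc : 0 ≤ c) (s : Set ℝ) :
    volume (c • s) = ENNReal.ofReal c * volume s := by
  rw [Measure.addHaar_smul_of_nonneg volume hc s]
  simp

lemma vol_combo {a b : ℝ} (ha : 0 < a) (hb : 0 < b) (hab : a + b = 1)
    (A B C : Set ℝ) (hAm : MeasurableSet A) (hBm : MeasurableSet B)
    (hAne : A.Nonempty) (hBne : B.Nonempty)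
    (hAfin : volume A ≠ ⊤) (hBfin : volume B ≠ ⊤)
    (hsub : ∀ x ∈ A, ∀ y ∈ B, a * x + b * y ∈ C) :
    ENNReal.ofReal a * volume A + ENNReal.ofReal b * volume B ≤ volume C := by
  rcases eq_top_or_lt_top (volume C) with hC | hC
  · simp [hC]
  apply ENNReal.le_of_forall_pos_le_add
  intro ε hε _
  obtain ⟨K, hKA, hKc, hKm⟩ := hAm.exists_isCompact_lt_add hAfin (ε := ε) (by simpa using hε.ne')
  obtain ⟨L, hLB, hLc, hLm⟩ := hBm.exists_isCompact_lt_add hBfin (ε := ε) (by simpa using hε.ne')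
  obtain ⟨x₀, hx₀⟩ := hAne
  obtain ⟨y₀, hy₀⟩ := hBne
  set K' : Set ℝ := K ∪ {x₀} with hK'def
  set L' : Set ℝ := L ∪ {y₀} with hL'def
  have hK' : IsCompact K' := hKc.union isCompact_singleton
  have hL' : IsCompact L' := hLc.union isCompact_singleton
  have hK'A : K' ⊆ A := union_subset hKA (by simpa using hx₀)
  have hL'B : L' ⊆ B := union_subset hLB (by simpa using hy₀)
  have key : volume (a • K') + volume (b • L') ≤ volume C := by
    have hKne' : (a • K').Nonempty := Set.Nonempty.smul_set ⟨x₀, by simp [hK'def]⟩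
    have hLne' : (b • L').Nonempty := Set.Nonempty.smul_set ⟨y₀, by simp [hL'def]⟩
    refine le_trans (bm_compact _ _ (hK'.smul a) (hL'.smul b) hKne' hLne') ?_
    apply measure_mono
    rintro _ ⟨_, ⟨x, hx, rfl⟩, _, ⟨y, hy, rfl⟩, rfl⟩
    exact hsub x (hK'A hx) y (hL'B hy)
  rw [vol_smul a ha.le, vol_smul b hb.le] at key
  have hKK' : volume K ≤ volume K' := measure_mono Set.subset_union_left
  have hLL' : volume L ≤ volume L' := measure_mono Set.subset_union_left
  have hKm' : volume A ≤ volume K' + ε := hKm.le.trans (by gcongr)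
  have hLm' : volume B ≤ volume L' + ε := hLm.le.trans (by gcongr)
  calc ENNReal.ofReal a * volume A + ENNReal.ofReal b * volume B
      ≤ (ENNReal.ofReal a * volume K' + ENNReal.ofReal b * volume L')
        + (ENNReal.ofReal a + ENNReal.ofReal b) * ε := by
        rw [mul_comm _ (ε:ℝ≥0∞), mul_add]
        calc ENNReal.ofReal a * volume A + ENNReal.ofReal b * volume B
            ≤ ENNReal.ofReal a * (volume K' + ε) + ENNReal.ofReal b * (volume L' + ε) := by
              gcongr
          _ = _ := by ring
    _ ≤ volume C + ε := by
        have h1 : ENNReal.ofReal a + ENNReal.ofReal b = 1 := by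
          rw [← ENNReal.ofReal_add ha.le hb.le, hab]; simp
        rw [h1, one_mul]
        exact add_le_add key le_rfl

lemma layer_restrict (f : ℝ → ℝ) (hf0 : ∀ x, 0 ≤ f x) (S : ℝ)
    (hfS : ∀ x, f x ≤ S) :
    ∫⁻ t in Ioi (0:ℝ), volume {x | t ≤ f x} =
      ∫⁻ t in Ioo (0:ℝ) S, volume {x | t ≤ f x} := by
  have h1 : ∫⁻ t in Ioi (0:ℝ), volume {x | t ≤ f x} =
      ∫⁻ t in Ioi (0:ℝ), (Ioo (0:ℝ) S).indicator (fun t => volume {x | t ≤ f x}) t := by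
    apply setLIntegral_congr_fun_ae measurableSet_Ioi
    have hS : ∀ᵐ t : ℝ, t ≠ S := by
      rw [ae_iff]; simpa using measure_singleton S
    filter_upwards [hS] with t htS ht
    by_cases hmem : t ∈ Ioo (0:ℝ) S
    · rw [indicator_of_mem hmem]
    · rw [indicator_of_notMem hmem]
      have htS' : S < t := by
        rcases lt_or_ge t S with h | h
        · exact absurd ⟨ht, h⟩ hmem
        · exact lt_of_le_of_ne h (Ne.symm htS)
      have : {x | t ≤ f x} = ∅ := by
        ext x; simp only [mem_setOf_eq, mem_empty_iff_false, iff_false, not_le]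
        exact lt_of_le_of_lt (hfS x) htS'
      simp [this]
  rw [h1, setLIntegral_indicator measurableSet_Ioo,
    Set.inter_eq_self_of_subset_left Ioo_subset_Ioi_self]

lemma PL1core (f g h : ℝ → ℝ) (a b : ℝ) (ha : 0 < a) (hb : 0 < b) (hab : a + b = 1)
    (hfm : Measurable f) (hgm : Measurable g) (hhm : Measurable h)
    (hf0 : ∀ x, 0 ≤ f x) (hg0 : ∀ x, 0 ≤ g x) (hh0 : ∀ x, 0 ≤ h x)
    (hfb : BddAbove (Set.range f)) (hgb : BddAbove (Set.range g))
    (hfin : ∀ s : ℝ, 0 < s → volume {x | s ≤ f x} ≠ ⊤)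
    (hgin : ∀ s : ℝ, 0 < s → volume {x | s ≤ g x} ≠ ⊤)
    (hsup : sSup (Set.range f) = sSup (Set.range g))
    (hyp : ∀ x y, f x ^ a * g y ^ b ≤ h (a * x + b * y)) :
    ENNReal.ofReal a * (∫⁻ x, ENNReal.ofReal (f x)) +
      ENNReal.ofReal b * (∫⁻ x, ENNReal.ofReal (g x)) ≤ ∫⁻ x, ENNReal.ofReal (h x) := by
  set S := sSup (Set.range f) with hSdef
  have hfS : ∀ x, f x ≤ S := fun x => le_csSup hfb ⟨x, rfl⟩
  have hgS : ∀ x, g x ≤ S := fun x => hsup ▸ le_csSup hgb ⟨x, rfl⟩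
  -- layer cake representations
  have Lf : ∫⁻ x, ENNReal.ofReal (f x) = ∫⁻ t in Ioi (0:ℝ), volume {x | t ≤ f x} :=
    lintegral_eq_lintegral_meas_le volume (Filter.Eventually.of_forall hf0) hfm.aemeasurable
  have Lg : ∫⁻ x, ENNReal.ofReal (g x) = ∫⁻ t in Ioi (0:ℝ), volume {x | t ≤ g x} :=
    lintegral_eq_lintegral_meas_le volume (Filter.Eventually.of_forall hg0) hgm.aemeasurable
  have Lh : ∫⁻ x, ENNReal.ofReal (h x) = ∫⁻ t in Ioi (0:ℝ), volume {x | t ≤ h x} :=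
    lintegral_eq_lintegral_meas_le volume (Filter.Eventually.of_forall hh0) hhm.aemeasurable
  rw [Lf, Lg, Lh, layer_restrict f hf0 S hfS, layer_restrict g hg0 S hgS]
  -- pointwise estimate on (0, S)
  have key : ∀ t ∈ Ioo (0:ℝ) S,
      ENNReal.ofReal a * volume {x | t ≤ f x} + ENNReal.ofReal b * volume {x | t ≤ g x}
        ≤ volume {x | t ≤ h x} := by
    intro t ht
    obtain ⟨ht0, htS⟩ := ht
    have hAne : {x | t ≤ f x}.Nonempty := by
      obtain ⟨_, ⟨x, rfl⟩, hv⟩ := exists_lt_of_lt_csSup (Set.range_nonempty f) htS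
      exact ⟨x, hv.le⟩
    have hBne : {x | t ≤ g x}.Nonempty := by
      obtain ⟨_, ⟨x, rfl⟩, hv⟩ := exists_lt_of_lt_csSup (Set.range_nonempty g) (hsup ▸ htS)
      exact ⟨x, hv.le⟩
    refine vol_combo ha hb hab _ _ _ (hfm measurableSet_Ici) (hgm measurableSet_Ici)
      hAne hBne (hfin t ht0) (hgin t ht0) ?_
    intro x hx y hy
    have h1 : t ^ a * t ^ b ≤ f x ^ a * g y ^ b := by
      apply mul_le_mul
      · exact Real.rpow_le_rpow ht0.le hx ha.le
      · exact Real.rpow_le_rpow ht0.le hy hb.le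
      · exact Real.rpow_nonneg ht0.le b
      · exact Real.rpow_nonneg (le_trans ht0.le hx) a
    have h2 : t ^ a * t ^ b = t := by
      rw [← Real.rpow_add ht0, hab, Real.rpow_one]
    show t ≤ h (a * x + b * y)
    calc t = t ^ a * t ^ b := h2.symm
      _ ≤ f x ^ a * g y ^ b := h1
      _ ≤ h (a * x + b * y) := hyp x y
  -- measurability of level-measure functions
  have measF : ∀ (f : ℝ → ℝ), Measurable (fun t => volume {x | t ≤ f x}) := by
    intro f
    apply Antitone.measurable
    intro t₁ t₂ hle
    exact measure_mono (fun x hx => le_trans hle hx)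
  calc ENNReal.ofReal a * (∫⁻ t in Ioo (0:ℝ) S, volume {x | t ≤ f x}) +
        ENNReal.ofReal b * (∫⁻ t in Ioo (0:ℝ) S, volume {x | t ≤ g x})
      = ∫⁻ t in Ioo (0:ℝ) S, (ENNReal.ofReal a * volume {x | t ≤ f x} +
          ENNReal.ofReal b * volume {x | t ≤ g x}) := by
        rw [lintegral_add_left ((measF f).const_mul _), lintegral_const_mul _ (measF f),
          lintegral_const_mul _ (measF g)]
    _ ≤ ∫⁻ t in Ioo (0:ℝ) S, volume {x | t ≤ h x} := by
        apply setLIntegral_mono (measF h) key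
    _ ≤ ∫⁻ t in Ioi (0:ℝ), volume {x | t ≤ h x} :=
        lintegral_mono_set Ioo_subset_Ioi_self

lemma ennreal_amgm {a b : ℝ} (ha : 0 < a) (hb : 0 < b) (hab : a + b = 1)
    (x y : ℝ≥0∞) : x ^ a * y ^ b ≤ ENNReal.ofReal a * x + ENNReal.ofReal b * y := by
  rcases eq_or_ne x 0 with rfl | hx0
  · rw [ENNReal.zero_rpow_of_pos ha, zero_mul]; exact zero_le
  rcases eq_or_ne y 0 with rfl | hy0
  · rw [ENNReal.zero_rpow_of_pos hb, mul_zero]; exact zero_le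
  rcases eq_or_ne x ⊤ with rfl | hxt
  · have : ENNReal.ofReal a * ⊤ = ⊤ := by
      rw [ENNReal.mul_top]; simp [ENNReal.ofReal_eq_zero, not_le.mpr ha]
    rw [this]; simp [top_add]
  rcases eq_or_ne y ⊤ with rfl | hyt
  · have : ENNReal.ofReal b * ⊤ = ⊤ := by
      rw [ENNReal.mul_top]; simp [ENNReal.ofReal_eq_zero, not_le.mpr hb]
    rw [this]; simp [add_top]
  -- finite case
  have hx : x = ENNReal.ofReal x.toReal := (ENNReal.ofReal_toReal hxt).symm
  have hy : y = ENNReal.ofReal y.toReal := (ENNReal.ofReal_toReal hyt).symm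
  have hxr : 0 ≤ x.toReal := ENNReal.toReal_nonneg
  have hyr : 0 ≤ y.toReal := ENNReal.toReal_nonneg
  have ex : x ^ a = ENNReal.ofReal (x.toReal ^ a) := by
    conv_lhs => rw [hx]
    exact ENNReal.ofReal_rpow_of_nonneg hxr ha.le
  have ey : y ^ b = ENNReal.ofReal (y.toReal ^ b) := by
    conv_lhs => rw [hy]
    exact ENNReal.ofReal_rpow_of_nonneg hyr hb.le
  calc x ^ a * y ^ b
      = ENNReal.ofReal (x.toReal ^ a * y.toReal ^ b) := by
        rw [ex, ey, ← ENNReal.ofReal_mul (Real.rpow_nonneg hxr a)]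
    _ ≤ ENNReal.ofReal (a * x.toReal + b * y.toReal) := by
        apply ENNReal.ofReal_le_ofReal
        exact Real.geom_mean_le_arith_mean2_weighted ha.le hb.le hxr hyr hab
    _ = ENNReal.ofReal a * x + ENNReal.ofReal b * y := by
        rw [ENNReal.ofReal_add (by positivity) (by positivity),
          ENNReal.ofReal_mul ha.le, ENNReal.ofReal_mul hb.le, ← hx, ← hy]

lemma sSup_range_mul {f : ℝ → ℝ} (hfb : BddAbove (Set.range f)) {c : ℝ} (hc : 0 < c) :
    sSup (Set.range (fun x => f x * c)) = sSup (Set.range f) * c := by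
  have h1 : IsLUB (Set.range f) (sSup (Set.range f)) :=
    isLUB_csSup (Set.range_nonempty f) hfb
  have h2 : IsLUB (Set.range (fun x => f x * c)) (sSup (Set.range f) * c) := by
    constructor
    · rintro _ ⟨x, rfl⟩
      exact mul_le_mul_of_nonneg_right (h1.1 ⟨x, rfl⟩) hc.le
    · intro u hu
      rw [← div_mul_cancel₀ u hc.ne']
      apply mul_le_mul_of_nonneg_right _ hc.le
      apply h1.2
      rintro _ ⟨x, rfl⟩
      rw [le_div_iff₀ hc]
      exact hu ⟨x, rfl⟩
  exact h2.csSup_eq ⟨f 0 * c, ⟨0, rfl⟩⟩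

lemma PL1real (f g h : ℝ → ℝ) (a b : ℝ) (ha : 0 < a) (hb : 0 < b) (hab : a + b = 1)
    (hfm : Measurable f) (hgm : Measurable g) (hhm : Measurable h)
    (hf0 : ∀ x, 0 ≤ f x) (hg0 : ∀ x, 0 ≤ g x) (hh0 : ∀ x, 0 ≤ h x)
    (hfb : BddAbove (Set.range f)) (hgb : BddAbove (Set.range g))
    (hfin : ∀ s : ℝ, 0 < s → volume {x | s ≤ f x} ≠ ⊤)
    (hgin : ∀ s : ℝ, 0 < s → volume {x | s ≤ g x} ≠ ⊤)
    (hyp : ∀ x y, f x ^ a * g y ^ b ≤ h (a * x + b * y)) :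
    (∫⁻ x, ENNReal.ofReal (f x)) ^ a * (∫⁻ x, ENNReal.ofReal (g x)) ^ b
      ≤ ∫⁻ x, ENNReal.ofReal (h x) := by
  set Sf := sSup (Set.range f) with hSf
  set Sg := sSup (Set.range g) with hSg
  have hSf0 : 0 ≤ Sf := le_trans (hf0 0) (le_csSup hfb ⟨0, rfl⟩)
  have hSg0 : 0 ≤ Sg := le_trans (hg0 0) (le_csSup hgb ⟨0, rfl⟩)
  rcases eq_or_lt_of_le hSf0 with hSfz | hSfpos
  · -- f identically zero
    have hfz : ∀ x, f x = 0 := fun x =>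
      le_antisymm (le_trans (le_csSup hfb ⟨x, rfl⟩) hSfz.symm.le) (hf0 x)
    have : (∫⁻ x, ENNReal.ofReal (f x)) = 0 := by simp [hfz]
    rw [this, ENNReal.zero_rpow_of_pos ha, zero_mul]
    exact zero_le
  rcases eq_or_lt_of_le hSg0 with hSgz | hSgpos
  · have hgz : ∀ x, g x = 0 := fun x =>
      le_antisymm (le_trans (le_csSup hgb ⟨x, rfl⟩) hSgz.symm.le) (hg0 x)
    have : (∫⁻ x, ENNReal.ofReal (g x)) = 0 := by simp [hgz]
    rw [this, ENNReal.zero_rpow_of_pos hb, mul_zero]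
    exact zero_le
  -- scaling
  set c : ℝ := Sf ^ a * Sg ^ b with hc
  have hcpos : 0 < c := mul_pos (Real.rpow_pos_of_pos hSfpos a) (Real.rpow_pos_of_pos hSgpos b)
  set f₂ : ℝ → ℝ := fun x => f x * Sf⁻¹ with hf₂
  set g₂ : ℝ → ℝ := fun x => g x * Sg⁻¹ with hg₂
  set h₂ : ℝ → ℝ := fun x => h x * c⁻¹ with hh₂
  have hsup₂ : sSup (Set.range f₂) = sSup (Set.range g₂) := by
    rw [hf₂, hg₂, sSup_range_mul hfb (inv_pos.mpr hSfpos),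
      sSup_range_mul hgb (inv_pos.mpr hSgpos), ← hSf, ← hSg,
      mul_inv_cancel₀ hSfpos.ne', mul_inv_cancel₀ hSgpos.ne']
  have hyp₂ : ∀ x y, f₂ x ^ a * g₂ y ^ b ≤ h₂ (a * x + b * y) := by
    intro x y
    have e1 : f₂ x ^ a * g₂ y ^ b = f x ^ a * g y ^ b * c⁻¹ := by
      rw [hf₂, hg₂, Real.mul_rpow (hf0 x) (inv_nonneg.mpr hSf0),
        Real.mul_rpow (hg0 y) (inv_nonneg.mpr hSg0),
        Real.inv_rpow hSf0, Real.inv_rpow hSg0, hc, mul_inv]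
      ring
    rw [e1, hh₂]
    exact mul_le_mul_of_nonneg_right (hyp x y) (inv_nonneg.mpr hcpos.le)
  have key := PL1core f₂ g₂ h₂ a b ha hb hab
    (hfm.mul_const _) (hgm.mul_const _) (hhm.mul_const _)
    (fun x => mul_nonneg (hf0 x) (inv_nonneg.mpr hSf0))
    (fun x => mul_nonneg (hg0 x) (inv_nonneg.mpr hSg0))
    (fun x => mul_nonneg (hh0 x) (inv_nonneg.mpr hcpos.le))
    ?_ ?_ ?_ ?_ hsup₂ hyp₂
  · -- convert key to the goal
    have ef : (∫⁻ x, ENNReal.ofReal (f₂ x)) = ENNReal.ofReal Sf⁻¹ * ∫⁻ x, ENNReal.ofReal (f x) := by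
      rw [← lintegral_const_mul' _ _ ENNReal.ofReal_ne_top]
      apply lintegral_congr
      intro x
      simp only [hf₂]
      rw [mul_comm (f x), ENNReal.ofReal_mul (inv_nonneg.mpr hSf0)]
    have eg : (∫⁻ x, ENNReal.ofReal (g₂ x)) = ENNReal.ofReal Sg⁻¹ * ∫⁻ x, ENNReal.ofReal (g x) := by
      rw [← lintegral_const_mul' _ _ ENNReal.ofReal_ne_top]
      apply lintegral_congr
      intro x
      simp only [hg₂]
      rw [mul_comm (g x), ENNReal.ofReal_mul (inv_nonneg.mpr hSg0)]
    have eh : (∫⁻ x, ENNReal.ofReal (h₂ x)) = ENNReal.ofReal c⁻¹ * ∫⁻ x, ENNReal.ofReal (h x) := by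
      rw [← lintegral_const_mul' _ _ ENNReal.ofReal_ne_top]
      apply lintegral_congr
      intro x
      simp only [hh₂]
      rw [mul_comm (h x), ENNReal.ofReal_mul (inv_nonneg.mpr hcpos.le)]
    have step : (∫⁻ x, ENNReal.ofReal (f₂ x)) ^ a * (∫⁻ x, ENNReal.ofReal (g₂ x)) ^ b
        ≤ ∫⁻ x, ENNReal.ofReal (h₂ x) :=
      le_trans (ennreal_amgm ha hb hab _ _) key
    rw [ef, eg, eh, ENNReal.mul_rpow_of_nonneg _ _ ha.le, ENNReal.mul_rpow_of_nonneg _ _ hb.le]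
      at step
    have ec : ENNReal.ofReal Sf⁻¹ ^ a * ENNReal.ofReal Sg⁻¹ ^ b = ENNReal.ofReal c⁻¹ := by
      rw [ENNReal.ofReal_rpow_of_pos (inv_pos.mpr hSfpos),
        ENNReal.ofReal_rpow_of_pos (inv_pos.mpr hSgpos),
        ← ENNReal.ofReal_mul (by positivity)]
      congr 1
      rw [hc, mul_inv, Real.inv_rpow hSf0, Real.inv_rpow hSg0]
    have hcne : ENNReal.ofReal c⁻¹ ≠ 0 := by
      simp [ENNReal.ofReal_eq_zero, not_le.mpr (inv_pos.mpr hcpos)]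
    have hcnetop : ENNReal.ofReal c⁻¹ ≠ ⊤ := ENNReal.ofReal_ne_top
    calc (∫⁻ x, ENNReal.ofReal (f x)) ^ a * (∫⁻ x, ENNReal.ofReal (g x)) ^ b
        = (ENNReal.ofReal c⁻¹)⁻¹ * (ENNReal.ofReal c⁻¹ *
            ((∫⁻ x, ENNReal.ofReal (f x)) ^ a * (∫⁻ x, ENNReal.ofReal (g x)) ^ b)) := by
          rw [← mul_assoc, ENNReal.inv_mul_cancel hcne hcnetop, one_mul]
      _ ≤ (ENNReal.ofReal c⁻¹)⁻¹ * (ENNReal.ofReal c⁻¹ * (∫⁻ x, ENNReal.ofReal (h x))) := by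
          refine mul_le_mul_right ?_ _
          calc ENNReal.ofReal c⁻¹ *
              ((∫⁻ x, ENNReal.ofReal (f x)) ^ a * (∫⁻ x, ENNReal.ofReal (g x)) ^ b)
              = ENNReal.ofReal Sf⁻¹ ^ a * (∫⁻ x, ENNReal.ofReal (f x)) ^ a *
                (ENNReal.ofReal Sg⁻¹ ^ b * (∫⁻ x, ENNReal.ofReal (g x)) ^ b) := by
                rw [← ec]; ring
            _ ≤ ENNReal.ofReal c⁻¹ * (∫⁻ x, ENNReal.ofReal (h x)) := step
      _ = ∫⁻ x, ENNReal.ofReal (h x) := by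
          rw [← mul_assoc, ENNReal.inv_mul_cancel hcne hcnetop, one_mul]
  · -- BddAbove range f₂
    refine ⟨Sf * Sf⁻¹, ?_⟩
    rintro _ ⟨x, rfl⟩
    exact mul_le_mul_of_nonneg_right (le_csSup hfb ⟨x, rfl⟩) (inv_nonneg.mpr hSf0)
  · refine ⟨Sg * Sg⁻¹, ?_⟩
    rintro _ ⟨x, rfl⟩
    exact mul_le_mul_of_nonneg_right (le_csSup hgb ⟨x, rfl⟩) (inv_nonneg.mpr hSg0)
  · intro s hs
    have : {x | s ≤ f₂ x} ⊆ {x | s * Sf ≤ f x} := by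
      intro x hx
      simp only [hf₂, mem_setOf_eq] at hx ⊢
      calc s * Sf ≤ (f x * Sf⁻¹) * Sf := mul_le_mul_of_nonneg_right hx hSf0
        _ = f x := by field_simp
    exact fun htop => hfin (s * Sf) (mul_pos hs hSfpos) (eq_top_iff.mpr (htop ▸ measure_mono this))
  · intro s hs
    have : {x | s ≤ g₂ x} ⊆ {x | s * Sg ≤ g x} := by
      intro x hx
      simp only [hg₂, mem_setOf_eq] at hx ⊢
      calc s * Sg ≤ (g x * Sg⁻¹) * Sg := mul_le_mul_of_nonneg_right hx hSg0
        _ = g x := by field_simp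
    exact fun htop => hgin (s * Sg) (mul_pos hs hSgpos) (eq_top_iff.mpr (htop ▸ measure_mono this))

lemma ennreal_rpow_iSup (u : ℕ → ℝ≥0∞) (hu : Monotone u) (a : ℝ) (ha : 0 < a) :
    (⨆ n, u n) ^ a = ⨆ n, u n ^ a := by
  have h1 : Filter.Tendsto u Filter.atTop (nhds (⨆ n, u n)) := tendsto_atTop_iSup hu
  have h2 : Filter.Tendsto (fun n => u n ^ a) Filter.atTop (nhds ((⨆ n, u n) ^ a)) :=
    (ENNReal.continuous_rpow_const.tendsto _).comp h1
  have h3 : Filter.Tendsto (fun n => u n ^ a) Filter.atTop (nhds (⨆ n, u n ^ a)) :=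
    tendsto_atTop_iSup (fun n m hnm => ENNReal.rpow_le_rpow (hu hnm) ha.le)
  exact tendsto_nhds_unique h2 h3

lemma ennreal_min_iSup (c : ℝ≥0∞) : ⨆ n : ℕ, min c (n : ℝ≥0∞) = c := by
  have h2 : ⨆ n : ℕ, c ⊓ (n : ℝ≥0∞) = c ⊓ (⨆ n : ℕ, (n : ℝ≥0∞)) := (inf_iSup_eq _ _).symm
  show ⨆ n : ℕ, c ⊓ (n : ℝ≥0∞) = c
  rw [h2, ENNReal.iSup_natCast]
  simp

lemma PL1 (f g h : ℝ → ℝ≥0∞) (a b : ℝ) (ha : 0 < a) (hb : 0 < b) (hab : a + b = 1)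
    (hfm : Measurable f) (hgm : Measurable g) (hhm : Measurable h)
    (hyp : ∀ x y, f x ^ a * g y ^ b ≤ h (a * x + b * y)) :
    (∫⁻ x, f x) ^ a * (∫⁻ x, g x) ^ b ≤ ∫⁻ x, h x := by
  -- truncations
  set F : ℕ → ℝ → ℝ≥0∞ := fun n x => (Icc (-(n:ℝ)) (n:ℝ)).indicator (fun x => min (f x) n) x
    with hF
  set G : ℕ → ℝ → ℝ≥0∞ := fun n x => (Icc (-(n:ℝ)) (n:ℝ)).indicator (fun x => min (g x) n) x
    with hG
  set H : ℕ → ℝ → ℝ≥0∞ := fun n x => min (h x) n with hH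
  have hFle : ∀ n x, F n x ≤ min (f x) n := fun n x => indicator_le_self _ _ x
  have hGle : ∀ n x, G n x ≤ min (g x) n := fun n x => indicator_le_self _ _ x
  have hFtop : ∀ n x, F n x ≠ ⊤ := fun n x =>
    ne_top_of_le_ne_top (ENNReal.natCast_ne_top n) ((hFle n x).trans (min_le_right _ _))
  have hGtop : ∀ n x, G n x ≠ ⊤ := fun n x =>
    ne_top_of_le_ne_top (ENNReal.natCast_ne_top n) ((hGle n x).trans (min_le_right _ _))
  have hHtop : ∀ n x, H n x ≠ ⊤ := fun n x =>
    ne_top_of_le_ne_top (ENNReal.natCast_ne_top n) (min_le_right _ _)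
  have hFm : ∀ n, Measurable (F n) := fun n =>
    ((hfm.min measurable_const).indicator measurableSet_Icc)
  have hGm : ∀ n, Measurable (G n) := fun n =>
    ((hgm.min measurable_const).indicator measurableSet_Icc)
  have hHm : ∀ n, Measurable (H n) := fun n => hhm.min measurable_const
  -- ENNReal-level truncated hypothesis
  have hypn : ∀ n x y, F n x ^ a * G n y ^ b ≤ H n (a * x + b * y) := by
    intro n x y
    by_cases hx : x ∈ Icc (-(n:ℝ)) (n:ℝ)
    · by_cases hy : y ∈ Icc (-(n:ℝ)) (n:ℝ)
      · rw [hF, hG]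
        simp only [indicator_of_mem hx, indicator_of_mem hy]
        rw [hH]
        apply le_min
        · calc min (f x) n ^ a * min (g y) n ^ b
              ≤ f x ^ a * g y ^ b := by
                gcongr <;> [exact min_le_left _ _; exact min_le_left _ _]
            _ ≤ h (a * x + b * y) := hyp x y
        · calc min (f x) n ^ a * min (g y) n ^ b
              ≤ (n : ℝ≥0∞) ^ a * (n : ℝ≥0∞) ^ b := by
                gcongr <;> [exact min_le_right _ _; exact min_le_right _ _]
            _ = (n : ℝ≥0∞) ^ (a + b) := (ENNReal.rpow_add_of_nonneg _ _ ha.le hb.le).symm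
            _ = n := by rw [hab, ENNReal.rpow_one]
      · have : G n y = 0 := by rw [hG]; exact indicator_of_notMem hy _
        rw [this, ENNReal.zero_rpow_of_pos hb, mul_zero]
        exact zero_le
    · have : F n x = 0 := by rw [hF]; exact indicator_of_notMem hx _
      rw [this, ENNReal.zero_rpow_of_pos ha, zero_mul]
      exact zero_le
  -- real truncations
  set F' : ℕ → ℝ → ℝ := fun n x => (F n x).toReal with hF'
  set G' : ℕ → ℝ → ℝ := fun n x => (G n x).toReal with hG'
  set H' : ℕ → ℝ → ℝ := fun n x => (H n x).toReal with hH'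
  have hofF : ∀ n x, ENNReal.ofReal (F' n x) = F n x := fun n x =>
    ENNReal.ofReal_toReal (hFtop n x)
  have hofG : ∀ n x, ENNReal.ofReal (G' n x) = G n x := fun n x =>
    ENNReal.ofReal_toReal (hGtop n x)
  have hofH : ∀ n x, ENNReal.ofReal (H' n x) = H n x := fun n x =>
    ENNReal.ofReal_toReal (hHtop n x)
  -- apply PL1real at each level n
  have keyn : ∀ n : ℕ, (∫⁻ x, F n x) ^ a * (∫⁻ x, G n x) ^ b ≤ ∫⁻ x, H n x := by
    intro n
    have hyp' : ∀ x y, F' n x ^ a * G' n y ^ b ≤ H' n (a * x + b * y) := by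
      intro x y
      have h1 := hypn n x y
      have h2 : (F n x ^ a * G n y ^ b).toReal ≤ (H n (a * x + b * y)).toReal :=
        ENNReal.toReal_mono (hHtop n _) h1
      rwa [ENNReal.toReal_mul, ← ENNReal.toReal_rpow, ← ENNReal.toReal_rpow] at h2
    have res := PL1real (F' n) (G' n) (H' n) a b ha hb hab
      ((hFm n).ennreal_toReal) ((hGm n).ennreal_toReal) ((hHm n).ennreal_toReal)
      (fun x => ENNReal.toReal_nonneg) (fun x => ENNReal.toReal_nonneg)
      (fun x => ENNReal.toReal_nonneg)
      ⟨(n : ℝ), by rintro _ ⟨x, rfl⟩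
                   exact ENNReal.toReal_le_of_le_ofReal (Nat.cast_nonneg n)
                     (by rw [ENNReal.ofReal_natCast]
                         exact (hFle n x).trans (min_le_right _ _))⟩
      ⟨(n : ℝ), by rintro _ ⟨x, rfl⟩
                   exact ENNReal.toReal_le_of_le_ofReal (Nat.cast_nonneg n)
                     (by rw [ENNReal.ofReal_natCast]
                         exact (hGle n x).trans (min_le_right _ _))⟩
      ?_ ?_ hyp'
    · simp_rw [hofF, hofG, hofH] at res
      exact res
    · intro s hs
      have hsub : {x | s ≤ F' n x} ⊆ Icc (-(n:ℝ)) (n:ℝ) := by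
        intro x hx
        by_contra hxn
        have : F n x = 0 := by rw [hF]; exact indicator_of_notMem hxn _
        rw [mem_setOf_eq, hF'] at hx
        simp only [this, ENNReal.toReal_zero] at hx
        linarith
      exact ne_top_of_le_ne_top measure_Icc_lt_top.ne (measure_mono hsub)
    · intro s hs
      have hsub : {x | s ≤ G' n x} ⊆ Icc (-(n:ℝ)) (n:ℝ) := by
        intro x hx
        by_contra hxn
        have : G n x = 0 := by rw [hG]; exact indicator_of_notMem hxn _
        rw [mem_setOf_eq, hG'] at hx
        simp only [this, ENNReal.toReal_zero] at hx
        linarith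
      exact ne_top_of_le_ne_top measure_Icc_lt_top.ne (measure_mono hsub)
  -- monotonicity in n
  have hFmono : ∀ x, Monotone (fun n => F n x) := by
    intro x n m hnm
    rw [hF]
    by_cases hx : x ∈ Icc (-(n:ℝ)) (n:ℝ)
    · have hx' : x ∈ Icc (-(m:ℝ)) (m:ℝ) := by
        obtain ⟨h1, h2⟩ := hx
        have : (n:ℝ) ≤ m := Nat.cast_le.mpr hnm
        constructor <;> [linarith; linarith]
      simp only [indicator_of_mem hx, indicator_of_mem hx']
      exact inf_le_inf_left _ (by exact_mod_cast Nat.cast_le.mpr hnm)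
    · simp only [indicator_of_notMem hx]
      exact zero_le
  have hGmono : ∀ x, Monotone (fun n => G n x) := by
    intro x n m hnm
    rw [hG]
    by_cases hx : x ∈ Icc (-(n:ℝ)) (n:ℝ)
    · have hx' : x ∈ Icc (-(m:ℝ)) (m:ℝ) := by
        obtain ⟨h1, h2⟩ := hx
        have : (n:ℝ) ≤ m := Nat.cast_le.mpr hnm
        constructor <;> [linarith; linarith]
      simp only [indicator_of_mem hx, indicator_of_mem hx']
      exact inf_le_inf_left _ (by exact_mod_cast Nat.cast_le.mpr hnm)
    · simp only [indicator_of_notMem hx]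
      exact zero_le
  -- pointwise suprema
  have hFsup : ∀ x, (⨆ n, F n x) = f x := by
    intro x
    apply le_antisymm
    · exact iSup_le fun n => (hFle n x).trans (min_le_left _ _)
    · obtain ⟨N, hN⟩ := exists_nat_ge |x|
      have hmem : ∀ k : ℕ, x ∈ Icc (-((N + k : ℕ):ℝ)) ((N + k : ℕ):ℝ) := by
        intro k
        have h1 : |x| ≤ ((N + k : ℕ):ℝ) := by
          refine hN.trans ?_
          exact_mod_cast Nat.le_add_right N k
        rw [abs_le] at h1
        exact ⟨h1.1, h1.2⟩
      calc f x = ⨆ k : ℕ, min (f x) k := (ennreal_min_iSup (f x)).symm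
        _ ≤ ⨆ n, F n x := by
            apply iSup_le
            intro k
            refine le_trans ?_ (le_iSup (fun n => F n x) (N + k))
            rw [hF]
            simp only [indicator_of_mem (hmem k)]
            exact inf_le_inf_left _ (by exact_mod_cast Nat.le_add_left k N)
  have hGsup : ∀ x, (⨆ n, G n x) = g x := by
    intro x
    apply le_antisymm
    · exact iSup_le fun n => (hGle n x).trans (min_le_left _ _)
    · obtain ⟨N, hN⟩ := exists_nat_ge |x|
      have hmem : ∀ k : ℕ, x ∈ Icc (-((N + k : ℕ):ℝ)) ((N + k : ℕ):ℝ) := by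
        intro k
        have h1 : |x| ≤ ((N + k : ℕ):ℝ) := by
          refine hN.trans ?_
          exact_mod_cast Nat.le_add_right N k
        rw [abs_le] at h1
        exact ⟨h1.1, h1.2⟩
      calc g x = ⨆ k : ℕ, min (g x) k := (ennreal_min_iSup (g x)).symm
        _ ≤ ⨆ n, G n x := by
            apply iSup_le
            intro k
            refine le_trans ?_ (le_iSup (fun n => G n x) (N + k))
            rw [hG]
            simp only [indicator_of_mem (hmem k)]
            exact inf_le_inf_left _ (by exact_mod_cast Nat.le_add_left k N)
  have hHsup : ∀ x, (⨆ n, H n x) = h x := fun x => ennreal_min_iSup (h x)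
  -- lintegral limits
  have hFint : (⨆ n, ∫⁻ x, F n x) = ∫⁻ x, f x := by
    rw [← lintegral_iSup hFm (fun n m hnm x => hFmono x hnm)]
    exact lintegral_congr fun x => hFsup x
  have hGint : (⨆ n, ∫⁻ x, G n x) = ∫⁻ x, g x := by
    rw [← lintegral_iSup hGm (fun n m hnm x => hGmono x hnm)]
    exact lintegral_congr fun x => hGsup x
  have hHint : (⨆ n, ∫⁻ x, H n x) = ∫⁻ x, h x := by
    rw [← lintegral_iSup hHm (fun n m hnm x => min_le_min le_rfl (by exact_mod_cast Nat.cast_le.mpr hnm))]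
    exact lintegral_congr fun x => hHsup x
  -- combine
  have hFImono : Monotone (fun n => ∫⁻ x, F n x) :=
    fun n m hnm => lintegral_mono fun x => hFmono x hnm
  have hGImono : Monotone (fun n => ∫⁻ x, G n x) :=
    fun n m hnm => lintegral_mono fun x => hGmono x hnm
  calc (∫⁻ x, f x) ^ a * (∫⁻ x, g x) ^ b
      = (⨆ n, ∫⁻ x, F n x) ^ a * (⨆ n, ∫⁻ x, G n x) ^ b := by rw [hFint, hGint]
    _ = (⨆ n, (∫⁻ x, F n x) ^ a) * (⨆ n, (∫⁻ x, G n x) ^ b) := by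
        rw [ennreal_rpow_iSup _ hFImono a ha, ennreal_rpow_iSup _ hGImono b hb]
    _ ≤ ⨆ n, (∫⁻ x, F n x) ^ a * (∫⁻ x, G n x) ^ b := by
        rw [ENNReal.iSup_mul]
        apply iSup_le
        intro n
        rw [ENNReal.mul_iSup]
        apply iSup_le
        intro m
        refine le_trans ?_ (le_iSup
          (fun k => (∫⁻ x, F k x) ^ a * (∫⁻ x, G k x) ^ b) (max n m))
        exact mul_le_mul' (ENNReal.rpow_le_rpow (hFImono (le_max_left n m)) ha.le)
          (ENNReal.rpow_le_rpow (hGImono (le_max_right n m)) hb.le)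
    _ ≤ ⨆ n, ∫⁻ x, H n x := iSup_mono keyn
    _ = ∫⁻ x, h x := hHint

lemma PLn : ∀ (n : ℕ) (f g h : (Fin n → ℝ) → ℝ≥0∞), Measurable f → Measurable g →
    Measurable h → ∀ (a b : ℝ), 0 < a → 0 < b → a + b = 1 →
    (∀ x y, f x ^ a * g y ^ b ≤ h (a • x + b • y)) →
    (∫⁻ x, f x) ^ a * (∫⁻ x, g x) ^ b ≤ ∫⁻ x, h x := by
  intro n
  induction n with
  | zero =>
    intro f g h hfm hgm hhm a b ha hb hab hyp
    rw [lintegral_unique f, lintegral_unique g, lintegral_unique h]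
    have hvol : (volume : Measure (Fin 0 → ℝ)) Set.univ = 1 := by
      simp [volume_pi, Measure.pi_univ]
    rw [hvol, mul_one, mul_one, mul_one]
    have hd : ∀ z w : Fin 0 → ℝ, z = w := fun z w => Subsingleton.elim z w
    refine le_trans (le_of_eq ?_) (le_trans (hyp default default) (le_of_eq (congrArg h (hd _ _))))
    exact congrArg₂ (· * ·) (congrArg (· ^ a) (congrArg f (hd _ _)))
      (congrArg (· ^ b) (congrArg g (hd _ _)))
  | succ n IH =>
    intro f g h hfm hgm hhm a b ha hb hab hyp
    set e := MeasurableEquiv.piFinSuccAbove (fun _ : Fin (n + 1) => ℝ) 0 with he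
    have hesm : Measurable (e.symm : ℝ × (Fin n → ℝ) → (Fin (n+1) → ℝ)) := e.symm.measurable
    have hep : MeasurePreserving e volume volume :=
      volume_preserving_piFinSuccAbove (fun _ : Fin (n + 1) => ℝ) 0
    have hlin : ∀ (x₁ y₁ : ℝ) (x' y' : Fin n → ℝ),
        a • (e.symm (x₁, x')) + b • (e.symm (y₁, y')) =
          e.symm (a * x₁ + b * y₁, a • x' + b • y') := by
      intro x₁ y₁ x' y'
      funext i
      refine Fin.cases ?_ ?_ i
      · simp [he, MeasurableEquiv.piFinSuccAbove]
      · intro j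
        simp [he, MeasurableEquiv.piFinSuccAbove]
    set F : ℝ → ℝ≥0∞ := fun x₁ => ∫⁻ x', f (e.symm (x₁, x')) with hFdef
    set G : ℝ → ℝ≥0∞ := fun y₁ => ∫⁻ y', g (e.symm (y₁, y')) with hGdef
    set H : ℝ → ℝ≥0∞ := fun z₁ => ∫⁻ z', h (e.symm (z₁, z')) with hHdef
    have hFm : Measurable F := Measurable.lintegral_prod_right' (hfm.comp hesm)
    have hGm : Measurable G := Measurable.lintegral_prod_right' (hgm.comp hesm)
    have hHm : Measurable H := Measurable.lintegral_prod_right' (hhm.comp hesm)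
    have hypFG : ∀ x₁ y₁, F x₁ ^ a * G y₁ ^ b ≤ H (a * x₁ + b * y₁) := by
      intro x₁ y₁
      apply IH (fun x' => f (e.symm (x₁, x'))) (fun y' => g (e.symm (y₁, y')))
        (fun z' => h (e.symm (a * x₁ + b * y₁, z')))
        (hfm.comp (hesm.comp measurable_prodMk_left))
        (hgm.comp (hesm.comp measurable_prodMk_left))
        (hhm.comp (hesm.comp measurable_prodMk_left))
        a b ha hb hab
      intro x' y'
      rw [← hlin]
      exact hyp _ _
    have key := PL1 F G H a b ha hb hab hFm hGm hHm hypFG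
    have ef : ∫⁻ x₁, F x₁ = ∫⁻ x, f x := by
      calc ∫⁻ x₁, F x₁ = ∫⁻ p : ℝ × (Fin n → ℝ), f (e.symm p) := by
            rw [Measure.volume_eq_prod]
            exact (lintegral_prod _ (hfm.comp hesm).aemeasurable).symm
        _ = ∫⁻ x, f (e.symm (e x)) := (hep.lintegral_comp (hfm.comp hesm)).symm
        _ = ∫⁻ x, f x := by simp
    have eg : ∫⁻ y₁, G y₁ = ∫⁻ x, g x := by
      calc ∫⁻ y₁, G y₁ = ∫⁻ p : ℝ × (Fin n → ℝ), g (e.symm p) := by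
            rw [Measure.volume_eq_prod]
            exact (lintegral_prod _ (hgm.comp hesm).aemeasurable).symm
        _ = ∫⁻ x, g (e.symm (e x)) := (hep.lintegral_comp (hgm.comp hesm)).symm
        _ = ∫⁻ x, g x := by simp
    have eh : ∫⁻ z₁, H z₁ = ∫⁻ x, h x := by
      calc ∫⁻ z₁, H z₁ = ∫⁻ p : ℝ × (Fin n → ℝ), h (e.symm p) := by
            rw [Measure.volume_eq_prod]
            exact (lintegral_prod _ (hhm.comp hesm).aemeasurable).symm
        _ = ∫⁻ x, h (e.symm (e x)) := (hep.lintegral_comp (hhm.comp hesm)).symm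
        _ = ∫⁻ x, h x := by simp
    rw [← ef, ← eg, ← eh]
    exact key

/-- Prékopa's theorem. -/
theorem prekopa (n : ℕ) (φ : ℝ × (Fin n → ℝ) → ℝ)
    (hφ : ConvexOn ℝ Set.univ φ)
    (hint : ∀ t : ℝ, Integrable (fun x : Fin n → ℝ => Real.exp (-φ (t, x)))) :
    ConvexOn ℝ Set.univ
      (fun t : ℝ => -Real.log (∫ x : Fin n → ℝ, Real.exp (-φ (t, x)))) := by
  have hφc : Continuous φ := by
    rw [← continuousOn_univ]
    exact hφ.continuousOn isOpen_univ
  set F : ℝ → ℝ := fun t => ∫ x : Fin n → ℝ, Real.exp (-φ (t, x)) with hFdef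
  have hFpos : ∀ t, 0 < F t := by
    intro t
    rw [hFdef]
    rw [integral_pos_iff_support_of_nonneg (fun x => (Real.exp_pos _).le) (hint t)]
    have hsupp : Function.support (fun x : Fin n → ℝ => Real.exp (-φ (t, x))) = univ := by
      ext x; simp [Function.mem_support, (Real.exp_pos _).ne']
    rw [hsupp]
    exact isOpen_univ.measure_pos volume univ_nonempty
  constructor
  · exact convex_univ
  intro t₀ _ t₁ _ a b ha hb hab
  rcases eq_or_lt_of_le ha with haz | hapos
  · have hb1 : b = 1 := by linarith
    simp [← haz, hb1]
  rcases eq_or_lt_of_le hb with hbz | hbpos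
  · have ha1 : a = 1 := by linarith
    simp [← hbz, ha1]
  -- the ENNReal-valued functions
  set fE : (Fin n → ℝ) → ℝ≥0∞ := fun x => ENNReal.ofReal (Real.exp (-φ (t₀, x))) with hfE
  set gE : (Fin n → ℝ) → ℝ≥0∞ := fun x => ENNReal.ofReal (Real.exp (-φ (t₁, x))) with hgE
  set hE : (Fin n → ℝ) → ℝ≥0∞ :=
    fun x => ENNReal.ofReal (Real.exp (-φ (a * t₀ + b * t₁, x))) with hhE
  have hmes : ∀ t : ℝ, Measurable (fun x : Fin n → ℝ => ENNReal.ofReal (Real.exp (-φ (t, x)))) := by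
    intro t
    apply Measurable.ennreal_ofReal
    exact (Real.continuous_exp.comp (hφc.comp (Continuous.prodMk_right t)).neg).measurable
  have hyp : ∀ x y, fE x ^ a * gE y ^ b ≤ hE (a • x + b • y) := by
    intro x y
    rw [hfE, hgE, hhE]
    rw [ENNReal.ofReal_rpow_of_pos (Real.exp_pos _), ENNReal.ofReal_rpow_of_pos (Real.exp_pos _),
      ← ENNReal.ofReal_mul (by positivity)]
    apply ENNReal.ofReal_le_ofReal
    rw [← Real.exp_mul, ← Real.exp_mul, ← Real.exp_add]
    apply Real.exp_le_exp.mpr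
    have hconv := hφ.2 (mem_univ (t₀, x)) (mem_univ (t₁, y)) ha hb hab
    have heq : a • ((t₀ : ℝ), x) + b • ((t₁ : ℝ), y) = (a * t₀ + b * t₁, a • x + b • y) := rfl
    rw [heq] at hconv
    have : -φ (t₀, x) * a + -φ (t₁, y) * b = -(a * φ (t₀, x) + b * φ (t₁, y)) := by ring
    rw [this]
    exact neg_le_neg hconv
  have key := PLn n fE gE hE (hmes t₀) (hmes t₁) (hmes _) a b hapos hbpos hab hyp
  -- convert lintegrals to integrals
  have hof : ∀ t : ℝ, (∫⁻ x, ENNReal.ofReal (Real.exp (-φ (t, x)))) = ENNReal.ofReal (F t) := by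
    intro t
    rw [hFdef]
    exact (ofReal_integral_eq_lintegral_ofReal (hint t)
      (Filter.Eventually.of_forall fun x => (Real.exp_pos _).le)).symm
  rw [hfE, hgE, hhE] at key
  rw [hof t₀, hof t₁, hof (a * t₀ + b * t₁)] at key
  have hreal : F t₀ ^ a * F t₁ ^ b ≤ F (a * t₀ + b * t₁) := by
    rw [ENNReal.ofReal_rpow_of_pos (hFpos t₀), ENNReal.ofReal_rpow_of_pos (hFpos t₁),
      ← ENNReal.ofReal_mul (by positivity)] at key
    exact (ENNReal.ofReal_le_ofReal_iff (hFpos _).le).mp key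
  -- translate to the -log inequality
  have hlogs : Real.log (F t₀ ^ a * F t₁ ^ b) ≤ Real.log (F (a * t₀ + b * t₁)) :=
    Real.log_le_log (mul_pos (Real.rpow_pos_of_pos (hFpos t₀) a)
      (Real.rpow_pos_of_pos (hFpos t₁) b)) hreal
  rw [Real.log_mul (Real.rpow_pos_of_pos (hFpos t₀) a).ne'
    (Real.rpow_pos_of_pos (hFpos t₁) b).ne', Real.log_rpow (hFpos t₀),
    Real.log_rpow (hFpos t₁)] at hlogs
  show -Real.log (F (a • t₀ + b • t₁)) ≤ a • (-Real.log (F t₀)) + b • (-Real.log (F t₁))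
  simp only [smul_eq_mul]
  linarith
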